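/- Let H : ℂ² → ℂ² be the polynomial map H(z₁,z₂) = (z₁⁶ + (44/31)z₂³ − z₂, z₂⁶ + (44/31)z₁³ − z₁). For z = (z₁,z₂) ∈ ℂ², let M(z) be the 2×2 matrix [[6z₁⁵, (132/31)z₂² − 1], [(132/31)z₁² − 1, 6z₂⁵]] (which is the Jacobian of H at z), and for k ∈ {2,…,6} let M_k(z) be the 2×2 matrix whose (1,1) entry is C(6,k)·z₁^{6−k}, (1,2) entry is (44/31)·C(3,k)·z₂^{3−k}, (2,1) entry is (44/31)·C(3,k)·z₁^{3−k}, and (2,2) entry is C(6,k)·z₂^{6−k}, where C(j,k) is the binomial coefficient and any entry whose binomial coefficient is zero is defined to be 0. Suppose M(z) is invertible and for all k ∈ {2,…,6}, σ(M(z)⁻¹·M_k(z)) < (0.03/‖M(z)⁻¹·H(z)‖)^{k−1}, where σ denotes the largest singular value (the ℓ² operator norm) and ‖·‖ is the Hermitian norm on ℂ². Then α(H,z) < 0.03. -/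

import Mathlib

noncomputable section

open Set

/-- `ℂⁿ` with the Hermitian (Euclidean) norm. -/
abbrev ECn (n : ℕ) := EuclideanSpace ℂ (Fin n)

/-- Smale's invariant `β(F, z) = ‖DF(z)⁻¹ F(z)‖` (using the convention that the
inverse of a non-invertible continuous linear map is `0`). -/
def betaInv {n : ℕ} (F : ECn n → ECn n) (z : ECn n) : ℝ :=
  ‖(fderiv ℂ F z).inverse (F z)‖

/-- Smale's invariant
`γ(F, z) = sup_{k ≥ 2} ‖DF(z)⁻¹ ∘ (1/k!)·D^k F(z)‖^{1/(k−1)}`, where `D^k F(z)`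
is the `k`-th derivative of `F` at `z` as a continuous multilinear map and the
norms are multilinear operator norms. -/
def gammaInv {n : ℕ} (F : ECn n → ECn n) (z : ECn n) : ℝ :=
  ⨆ k : ℕ, if 2 ≤ k then
      (((k.factorial : ℝ))⁻¹ *
          ‖(fderiv ℂ F z).inverse.compContinuousMultilinearMap
              (iteratedFDeriv ℂ k F z)‖) ^ ((1 : ℝ) / ((k : ℝ) - 1))
    else 0

/-- Smale's invariant `α(F, z) = β(F, z) · γ(F, z)`. -/
def alphaInv {n : ℕ} (F : ECn n → ECn n) (z : ECn n) : ℝ :=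
  betaInv F z * gammaInv F z

/-- The Newton endomorphism `N_F(z) = z − DF(z)⁻¹ F(z)`. -/
def newtonMap {n : ℕ} (F : ECn n → ECn n) (z : ECn n) : ECn n :=
  z - (fderiv ℂ F z).inverse (F z)

/-- `ζ` witnesses that `z₀` is an approximate root of `F`: `ζ` is a
nondegenerate root of `F`, the Newton iterates of `z₀` are all defined (the
derivative of `F` is invertible along them), and they converge to `ζ`
quadratically: `‖ζ − z_m‖ ≤ (1/2)^{2^{m−1}} ‖ζ − z₀‖` for all `m ≥ 1`. -/
def NewtonWitness {n : ℕ} (F : ECn n → ECn n) (z₀ ζ : ECn n) : Prop :=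
  F ζ = 0 ∧ IsUnit (fderiv ℂ F ζ) ∧
  (∀ m : ℕ, IsUnit (fderiv ℂ F ((newtonMap F)^[m] z₀))) ∧
  ∀ m : ℕ, 1 ≤ m →
    ‖ζ - (newtonMap F)^[m] z₀‖ ≤ (1 / 2 : ℝ) ^ (2 ^ (m - 1)) * ‖ζ - z₀‖

/-- `z₀` is an approximate root of `F`. -/
def IsApproximateRoot {n : ℕ} (F : ECn n → ECn n) (z₀ : ECn n) : Prop :=
  ∃ ζ, NewtonWitness F z₀ ζ

/-- The polynomial map `H(z₁,z₂) = (z₁⁶ + (44/31)z₂³ − z₂, z₂⁶ + (44/31)z₁³ − z₁)`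
on `ℂ²`. -/
def Hmap (z : ECn 2) : ECn 2 :=
  (WithLp.equiv 2 (Fin 2 → ℂ)).symm
    ![z 0 ^ 6 + (44 / 31) * z 1 ^ 3 - z 1, z 1 ^ 6 + (44 / 31) * z 0 ^ 3 - z 0]

/-- The Jacobian matrix `M(z)` of `H` at `z`. -/
def Mmat (z : ECn 2) : Matrix (Fin 2) (Fin 2) ℂ :=
  !![6 * z 0 ^ 5, (132 / 31) * z 1 ^ 2 - 1;
     (132 / 31) * z 0 ^ 2 - 1, 6 * z 1 ^ 5]

/-- The matrix `M_k(z)` of scaled `k`-th order partial derivatives of `H` at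
`z` (entries with vanishing binomial coefficient are `0`). -/
def Mkmat (k : ℕ) (z : ECn 2) : Matrix (Fin 2) (Fin 2) ℂ :=
  !![(Nat.choose 6 k : ℂ) * z 0 ^ (6 - k),
       (44 / 31) * (Nat.choose 3 k : ℂ) * z 1 ^ (3 - k);
     (44 / 31) * (Nat.choose 3 k : ℂ) * z 0 ^ (3 - k),
       (Nat.choose 6 k : ℂ) * z 1 ^ (6 - k)]

/-- The largest singular value of a `2 × 2` complex matrix, i.e. its `ℓ²`
operator norm. -/
def sigmaMax (M : Matrix (Fin 2) (Fin 2) ℂ) : ℝ :=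
  ‖LinearMap.toContinuousLinearMap (Matrix.toEuclideanLin M)‖

namespace HaasAux

abbrev eb (t : Fin 2) : ECn 2 := EuclideanSpace.single t 1
abbrev pr (j : Fin 2) : ECn 2 →L[ℂ] ℂ := EuclideanSpace.proj j

def P (k : ℕ) (j t : Fin 2) : ContinuousMultilinearMap ℂ (fun _ : Fin k => ECn 2) (ECn 2) :=
  (ContinuousMultilinearMap.mkPiRing ℂ (Fin k) (eb t)).compContinuousLinearMap fun _ => pr j

@[simp] lemma P_apply (k : ℕ) (j t : Fin 2) (v : Fin k → ECn 2) :
    P k j t v = (∏ i, v i j) • eb t := by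
  simp [P]

def d (n k : ℕ) : ℂ := (n.descFactorial k : ℂ)

def mono (c : ℂ) (n : ℕ) (j t : Fin 2) (k : ℕ) (z : ECn 2) :
    ContinuousMultilinearMap ℂ (fun _ : Fin k => ECn 2) (ECn 2) :=
  (c * d n k * z j ^ (n - k)) • P k j t

def T (k : ℕ) (z : ECn 2) : ContinuousMultilinearMap ℂ (fun _ : Fin k => ECn 2) (ECn 2) :=
  mono 1 6 0 0 k z + mono (44/31) 3 1 0 k z + mono (-1) 1 1 0 k z +
  mono 1 6 1 1 k z + mono (44/31) 3 0 1 k z + mono (-1) 1 0 1 k z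

def Dmono (c : ℂ) (n : ℕ) (j t : Fin 2) (k : ℕ) (z : ECn 2) :
    ECn 2 →L[ℂ] ContinuousMultilinearMap ℂ (fun _ : Fin k => ECn 2) (ECn 2) :=
  ((c * d n (k+1) * z j ^ (n - (k+1))) • pr j).smulRight (P k j t)

lemma mono_hasFDerivAt (c : ℂ) (n : ℕ) (j t : Fin 2) (k : ℕ) (z : ECn 2) :
    HasFDerivAt (fun w => mono c n j t k w) (Dmono c n j t k z) z := by
  have h1 : HasFDerivAt (fun w : ECn 2 => w j ^ (n - k))
      ((((n - k : ℕ) : ℂ) * z j ^ (n - k - 1)) • pr j) z :=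
    (hasDerivAt_pow (n - k) (z j)).comp_hasFDerivAt z (pr j).hasFDerivAt
  have h2 := (h1.const_mul (c * d n k)).smul_const (P k j t)
  have hd : (c * d n k) • ((((n - k : ℕ) : ℂ) * z j ^ (n - k - 1)) • pr j)
      = (c * d n (k+1) * z j ^ (n - (k+1))) • pr j := by
    rw [smul_smul]
    congr 1
    rw [← Nat.sub_sub]
    simp only [d, Nat.descFactorial_succ, Nat.cast_mul]
    ring
  rw [Dmono, ← hd]
  exact h2

def DT (k : ℕ) (z : ECn 2) :
    ECn 2 →L[ℂ] ContinuousMultilinearMap ℂ (fun _ : Fin k => ECn 2) (ECn 2) :=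
  Dmono 1 6 0 0 k z + Dmono (44/31) 3 1 0 k z + Dmono (-1) 1 1 0 k z +
  Dmono 1 6 1 1 k z + Dmono (44/31) 3 0 1 k z + Dmono (-1) 1 0 1 k z

lemma T_hasFDerivAt (k : ℕ) (z : ECn 2) :
    HasFDerivAt (fun w => T k w) (DT k z) z :=
  (((((mono_hasFDerivAt 1 6 0 0 k z).add (mono_hasFDerivAt (44/31) 3 1 0 k z)).add
    (mono_hasFDerivAt (-1) 1 1 0 k z)).add (mono_hasFDerivAt 1 6 1 1 k z)).add
    (mono_hasFDerivAt (44/31) 3 0 1 k z)).add (mono_hasFDerivAt (-1) 1 0 1 k z)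

lemma DT_apply (k : ℕ) (z u : ECn 2) (w : Fin k → ECn 2) :
    DT k z u w = T (k+1) z (Fin.cons u w) := by
  apply PiLp.ext
  intro i
  fin_cases i <;>
    simp [DT, Dmono, T, mono, Fin.prod_univ_succ, EuclideanSpace.single_apply,
      ContinuousLinearMap.smulRight_apply, PiLp.add_apply, PiLp.smul_apply,
      ContinuousLinearMap.add_apply, ContinuousMultilinearMap.add_apply, smul_eq_mul] <;>
    ring

lemma iteratedFDeriv_Hmap (k : ℕ) : iteratedFDeriv ℂ k Hmap = fun z => T k z := by
  induction k with
  | zero =>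
    funext z
    refine ContinuousMultilinearMap.ext fun v => ?_
    rw [iteratedFDeriv_zero_apply]
    apply PiLp.ext
    intro i
    fin_cases i <;>
      simp [T, mono, d, Hmap, EuclideanSpace.single_apply, PiLp.add_apply, PiLp.smul_apply,
        ContinuousMultilinearMap.add_apply, smul_eq_mul, WithLp.equiv_symm_apply, PiLp.toLp_apply] <;>
      ring
  | succ k ih =>
    funext z
    refine ContinuousMultilinearMap.ext fun v => ?_
    rw [iteratedFDeriv_succ_apply_left, ih, (T_hasFDerivAt k z).fderiv]
    conv_rhs => rw [← Fin.cons_self_tail v]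
    exact DT_apply k z (v 0) (Fin.tail v)


def vmono (c : ℂ) (n : ℕ) (j t : Fin 2) (z : ECn 2) : ECn 2 := (c * z j ^ n) • eb t

def Dvmono (c : ℂ) (n : ℕ) (j t : Fin 2) (z : ECn 2) : ECn 2 →L[ℂ] ECn 2 :=
  ((c * (n : ℂ) * z j ^ (n - 1)) • pr j).smulRight (eb t)

lemma vmono_hasFDerivAt (c : ℂ) (n : ℕ) (j t : Fin 2) (z : ECn 2) :
    HasFDerivAt (fun w => vmono c n j t w) (Dvmono c n j t z) z := by
  have h1 : HasFDerivAt (fun w : ECn 2 => w j ^ n)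
      (((n : ℂ) * z j ^ (n - 1)) • pr j) z :=
    (hasDerivAt_pow n (z j)).comp_hasFDerivAt z (pr j).hasFDerivAt
  have h2 := (h1.const_mul c).smul_const (eb t)
  have hd : c • (((n : ℂ) * z j ^ (n - 1)) • pr j)
      = (c * (n : ℂ) * z j ^ (n - 1)) • pr j := by
    rw [smul_smul, mul_assoc]
  rw [Dvmono, ← hd]
  exact h2

lemma Hmap_eq : Hmap = fun z =>
    vmono 1 6 0 0 z + vmono (44/31) 3 1 0 z + vmono (-1) 1 1 0 z +
    vmono 1 6 1 1 z + vmono (44/31) 3 0 1 z + vmono (-1) 1 0 1 z := by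
  funext z
  apply PiLp.ext
  intro i
  fin_cases i <;>
    simp [Hmap, vmono, EuclideanSpace.single_apply, PiLp.add_apply, PiLp.smul_apply,
      smul_eq_mul, WithLp.equiv_symm_apply, PiLp.toLp_apply] <;>
    ring

lemma Hmap_hasFDerivAt (z : ECn 2) :
    HasFDerivAt Hmap (Matrix.toEuclideanCLM (𝕜 := ℂ) (Mmat z)) z := by
  have h := (((((vmono_hasFDerivAt 1 6 0 0 z).add (vmono_hasFDerivAt (44/31) 3 1 0 z)).add
    (vmono_hasFDerivAt (-1) 1 1 0 z)).add (vmono_hasFDerivAt 1 6 1 1 z)).add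
    (vmono_hasFDerivAt (44/31) 3 0 1 z)).add (vmono_hasFDerivAt (-1) 1 0 1 z)
  rw [Hmap_eq]
  refine h.congr_fderiv ?_
  refine ContinuousLinearMap.ext fun u => ?_
  apply PiLp.ext
  intro i
  have happ : ∀ (N : Matrix (Fin 2) (Fin 2) ℂ) (x : ECn 2) (i : Fin 2),
      (Matrix.toEuclideanCLM (𝕜 := ℂ) N) x i = N.mulVec (fun l => x l) i := fun _ _ _ => rfl
  fin_cases i <;>
    simp [happ, Mmat, Dvmono, Matrix.mulVec, dotProduct, Fin.sum_univ_two, Matrix.vecHead, Matrix.vecTail, Function.comp,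
      EuclideanSpace.single_apply, PiLp.add_apply, PiLp.smul_apply, smul_eq_mul,
      ContinuousLinearMap.smulRight_apply, ContinuousLinearMap.add_apply] <;>
    ring

lemma fderiv_Hmap (z : ECn 2) :
    fderiv ℂ Hmap z = Matrix.toEuclideanCLM (𝕜 := ℂ) (Mmat z) :=
  (Hmap_hasFDerivAt z).fderiv

lemma inverse_fderiv (z : ECn 2) (hM : IsUnit (Mmat z)) :
    (fderiv ℂ Hmap z).inverse = Matrix.toEuclideanCLM (𝕜 := ℂ) (Mmat z)⁻¹ := by
  have hdet : IsUnit (Mmat z).det := (Matrix.isUnit_iff_isUnit_det _).mp hM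
  have h1 : Matrix.toEuclideanCLM (𝕜 := ℂ) (Mmat z) * Matrix.toEuclideanCLM (𝕜 := ℂ) (Mmat z)⁻¹
      = 1 := by rw [← map_mul, Matrix.mul_nonsing_inv _ hdet, map_one]
  have h2 : Matrix.toEuclideanCLM (𝕜 := ℂ) (Mmat z)⁻¹ * Matrix.toEuclideanCLM (𝕜 := ℂ) (Mmat z)
      = 1 := by rw [← map_mul, Matrix.nonsing_inv_mul _ hdet, map_one]
  rw [fderiv_Hmap, ← ContinuousLinearMap.ringInverse_eq_inverse]
  exact Ring.inverse_unit ⟨_, _, h1, h2⟩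

lemma sigmaMax_eq (N : Matrix (Fin 2) (Fin 2) ℂ) :
    sigmaMax N = ‖Matrix.toEuclideanCLM (𝕜 := ℂ) N‖ := by
  rw [sigmaMax]
  congr 1

set_option maxHeartbeats 1000000 in
lemma W_norm_le {k : ℕ} (hk : 0 < k) (v : Fin k → ECn 2) :
    ‖((WithLp.equiv 2 (Fin 2 → ℂ)).symm ![∏ i, v i 0, ∏ i, v i 1] : ECn 2)‖ ≤ ∏ i, ‖v i‖ := by
  have hnorm : ∀ i, ‖v i‖ ^ 2 = ‖v i 0‖ ^ 2 + ‖v i 1‖ ^ 2 := by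
    intro i
    rw [EuclideanSpace.norm_eq, Real.sq_sqrt (by positivity)]
    simp [Fin.sum_univ_two]
  have key : ‖(∏ i, v i 0 : ℂ)‖ ^ 2 + ‖(∏ i, v i 1 : ℂ)‖ ^ 2 ≤ (∏ i, ‖v i‖) ^ 2 := by
    rw [norm_prod, norm_prod, ← Finset.prod_pow, ← Finset.prod_pow, ← Finset.prod_pow]
    simp only [hnorm]
    refine Finset.prod_add_prod_le (i := (⟨0, hk⟩ : Fin k)) (Finset.mem_univ _) le_rfl ?_ ?_ ?_ ?_
    · intro j _ _; exact le_add_of_nonneg_right (by positivity)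
    · intro j _ _; exact le_add_of_nonneg_left (by positivity)
    · intro j _; positivity
    · intro j _; positivity
  have h1 : ‖((WithLp.equiv 2 (Fin 2 → ℂ)).symm ![∏ i, v i 0, ∏ i, v i 1] : ECn 2)‖
      = Real.sqrt (‖(∏ i, v i 0 : ℂ)‖ ^ 2 + ‖(∏ i, v i 1 : ℂ)‖ ^ 2) := by
    rw [EuclideanSpace.norm_eq]
    congr 1
    simp [Fin.sum_univ_two, WithLp.equiv_symm_apply, PiLp.toLp_apply]
  rw [h1]
  have h2 := Real.sqrt_le_sqrt key
  rwa [Real.sqrt_sq (Finset.prod_nonneg fun i _ => norm_nonneg (v i))] at h2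

set_option maxHeartbeats 1000000 in
lemma T_apply_eq {k : ℕ} (hk : 2 ≤ k) (z : ECn 2) (v : Fin k → ECn 2) :
    T k z v = (k.factorial : ℂ) • (Matrix.toEuclideanCLM (𝕜 := ℂ) (Mkmat k z))
      ((WithLp.equiv 2 (Fin 2 → ℂ)).symm ![∏ i, v i 0, ∏ i, v i 1]) := by
  have hd1 : d 1 k = 0 := by
    simp [d, Nat.descFactorial_eq_zero_iff_lt.2 (show 1 < k by omega)]
  have hd6 : d 6 k = (k.factorial : ℂ) * (Nat.choose 6 k : ℂ) := by
    rw [d, Nat.descFactorial_eq_factorial_mul_choose]; push_cast; ring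
  have hd3 : d 3 k = (k.factorial : ℂ) * (Nat.choose 3 k : ℂ) := by
    rw [d, Nat.descFactorial_eq_factorial_mul_choose]; push_cast; ring
  apply PiLp.ext
  intro i
  fin_cases i <;>
    simp [T, mono, hd1, hd6, hd3, Mkmat, Matrix.toLin'_apply, Matrix.mulVec, dotProduct,
      Fin.sum_univ_two, Matrix.vecHead, Matrix.vecTail, Function.comp,
      EuclideanSpace.single_apply, PiLp.add_apply, PiLp.smul_apply, smul_eq_mul,
      WithLp.equiv_symm_apply, PiLp.toLp_apply] <;>
    ring

lemma T_eq_zero {k : ℕ} (hk : 7 ≤ k) (z : ECn 2) : T k z = 0 := by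
  have h6 : d 6 k = 0 := by simp [d, Nat.descFactorial_eq_zero_iff_lt.2 (show 6 < k by omega)]
  have h3 : d 3 k = 0 := by simp [d, Nat.descFactorial_eq_zero_iff_lt.2 (show 3 < k by omega)]
  have h1 : d 1 k = 0 := by simp [d, Nat.descFactorial_eq_zero_iff_lt.2 (show 1 < k by omega)]
  ext w
  simp [T, mono, h6, h3, h1]

lemma key_bound (z : ECn 2) (hM : IsUnit (Mmat z)) {k : ℕ} (hk2 : 2 ≤ k) :
    (k.factorial : ℝ)⁻¹ *
        ‖(fderiv ℂ Hmap z).inverse.compContinuousMultilinearMap (iteratedFDeriv ℂ k Hmap z)‖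
      ≤ sigmaMax ((Mmat z)⁻¹ * Mkmat k z) := by
  rw [inverse_fderiv z hM, iteratedFDeriv_Hmap k]
  have hfac : (0:ℝ) < (k.factorial : ℝ) := by positivity
  have hσ0 : 0 ≤ sigmaMax ((Mmat z)⁻¹ * Mkmat k z) := by
    rw [sigmaMax_eq]; exact norm_nonneg _
  rw [inv_mul_le_iff₀ hfac]
  apply ContinuousMultilinearMap.opNorm_le_bound (mul_nonneg hfac.le hσ0)
  intro v
  have happ : (Matrix.toEuclideanCLM (𝕜 := ℂ) (Mmat z)⁻¹).compContinuousMultilinearMap (T k z) v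
      = (k.factorial : ℂ) • (Matrix.toEuclideanCLM (𝕜 := ℂ) ((Mmat z)⁻¹ * Mkmat k z))
          ((WithLp.equiv 2 (Fin 2 → ℂ)).symm ![∏ i, v i 0, ∏ i, v i 1]) := by
    rw [show (Matrix.toEuclideanCLM (𝕜 := ℂ) (Mmat z)⁻¹).compContinuousMultilinearMap (T k z) v
        = (Matrix.toEuclideanCLM (𝕜 := ℂ) (Mmat z)⁻¹) (T k z v) from rfl,
      T_apply_eq hk2, map_smul, map_mul, ContinuousLinearMap.mul_apply]
  rw [happ, norm_smul]
  have hnk : ‖((k.factorial : ℂ))‖ = (k.factorial : ℝ) := by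
    rw [Complex.norm_natCast]
  rw [hnk]
  have hW := W_norm_le (by omega : 0 < k) v
  have hN := (Matrix.toEuclideanCLM (𝕜 := ℂ) ((Mmat z)⁻¹ * Mkmat k z)).le_opNorm
    ((WithLp.equiv 2 (Fin 2 → ℂ)).symm ![∏ i, v i 0, ∏ i, v i 1])
  rw [← sigmaMax_eq] at hN
  calc (k.factorial : ℝ) * ‖(Matrix.toEuclideanCLM (𝕜 := ℂ) ((Mmat z)⁻¹ * Mkmat k z))
          ((WithLp.equiv 2 (Fin 2 → ℂ)).symm ![∏ i, v i 0, ∏ i, v i 1])‖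
      ≤ (k.factorial : ℝ) * (sigmaMax ((Mmat z)⁻¹ * Mkmat k z) * ∏ i, ‖v i‖) := by
        apply mul_le_mul_of_nonneg_left _ hfac.le
        exact hN.trans (mul_le_mul_of_nonneg_left hW hσ0)
    _ = (k.factorial : ℝ) * sigmaMax ((Mmat z)⁻¹ * Mkmat k z) * ∏ i, ‖v i‖ := by ring

lemma beta_eq (z : ECn 2) (hM : IsUnit (Mmat z)) :
    ‖(fderiv ℂ Hmap z).inverse (Hmap z)‖ =
      ‖(WithLp.equiv 2 (Fin 2 → ℂ)).symm ((Mmat z)⁻¹.mulVec fun i => Hmap z i)‖ := by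
  rw [inverse_fderiv z hM]
  congr 1

end HaasAux

/-- Sufficient criterion for `α(H, z) < 0.03` in terms of the matrices `M(z)`
and `M_k(z)`. -/
theorem haas_alpha_criterion (z : ECn 2) (hM : IsUnit (Mmat z))
    (hσ : ∀ k : ℕ, 2 ≤ k → k ≤ 6 →
      sigmaMax ((Mmat z)⁻¹ * Mkmat k z) <
        (0.03 / ‖(WithLp.equiv 2 (Fin 2 → ℂ)).symm
            ((Mmat z)⁻¹.mulVec fun i => Hmap z i)‖) ^ (k - 1)) :
    alphaInv Hmap z < 0.03 := by
  classical
  set β : ℝ := ‖(WithLp.equiv 2 (Fin 2 → ℂ)).symm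
      ((Mmat z)⁻¹.mulVec fun i => Hmap z i)‖ with hβdef
  have hβeq : betaInv Hmap z = β := HaasAux.beta_eq z hM
  have hσ2nn : (0:ℝ) ≤ sigmaMax ((Mmat z)⁻¹ * Mkmat 2 z) := by
    rw [HaasAux.sigmaMax_eq]; exact norm_nonneg _
  have hβ0 : (0:ℝ) < β := by
    rcases eq_or_lt_of_le (norm_nonneg _ : (0:ℝ) ≤ β) with h | h
    · exfalso
      have h2 := hσ 2 (by norm_num) (by norm_num)
      have hb : β = 0 := by rw [hβdef, ← h]
      rw [hb] at h2
      norm_num at h2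
      linarith
    · exact h
  set t : ℕ → ℝ := fun k =>
    (((k.factorial : ℝ))⁻¹ *
        ‖(fderiv ℂ Hmap z).inverse.compContinuousMultilinearMap
            (iteratedFDeriv ℂ k Hmap z)‖) ^ ((1 : ℝ) / ((k : ℝ) - 1)) with ht
  have main : ∀ k : ℕ, 2 ≤ k → k ≤ 6 → t k < 0.03 / β := by
    intro k hk2 hk6
    have ha0 : (0:ℝ) ≤ ((k.factorial : ℝ))⁻¹ *
        ‖(fderiv ℂ Hmap z).inverse.compContinuousMultilinearMap
            (iteratedFDeriv ℂ k Hmap z)‖ := by positivity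
    have hab := HaasAux.key_bound z hM hk2
    have hlt := lt_of_le_of_lt hab (hσ k hk2 hk6)
    have hkR : (1:ℝ) ≤ (k : ℝ) - 1 := by
      have : (2:ℝ) ≤ (k : ℝ) := by exact_mod_cast hk2
      linarith
    have he : (0:ℝ) < 1 / ((k : ℝ) - 1) := by positivity
    have hr0 : (0:ℝ) ≤ 0.03 / β := by positivity
    have hstep := Real.rpow_lt_rpow ha0 hlt he
    have hcast : ((k - 1 : ℕ) : ℝ) = (k : ℝ) - 1 := by
      push_cast [Nat.cast_sub (by omega : 1 ≤ k)]
      ring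
    have hpow : ((0.03 / β) ^ (k - 1) : ℝ) ^ ((1:ℝ) / ((k : ℝ) - 1)) = 0.03 / β := by
      rw [← Real.rpow_natCast (0.03 / β) (k - 1), ← Real.rpow_mul hr0, hcast,
        mul_one_div, div_self (by linarith : ((k:ℝ) - 1) ≠ 0), Real.rpow_one]
    calc t k < ((0.03 / β) ^ (k - 1) : ℝ) ^ ((1:ℝ) / ((k : ℝ) - 1)) := hstep
      _ = 0.03 / β := hpow
  set G := max (t 2) (max (t 3) (max (t 4) (max (t 5) (t 6)))) with hG
  have ht20 : (0:ℝ) ≤ t 2 := Real.rpow_nonneg (by positivity) _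
  have hG0 : (0:ℝ) ≤ G := le_trans ht20 (le_max_left _ _)
  have hker : ∀ k : ℕ, 7 ≤ k → t k = 0 := by
    intro k hk
    have h0 : (fderiv ℂ Hmap z).inverse.compContinuousMultilinearMap
        (iteratedFDeriv ℂ k Hmap z) = 0 := by
      rw [HaasAux.iteratedFDeriv_Hmap k]
      show (fderiv ℂ Hmap z).inverse.compContinuousMultilinearMap (HaasAux.T k z) = 0
      rw [HaasAux.T_eq_zero hk z]
      ext v
      simp
    have hne : ((1:ℝ) / ((k : ℝ) - 1)) ≠ 0 := by
      have : (7:ℝ) ≤ (k : ℝ) := by exact_mod_cast hk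
      have : ((k:ℝ) - 1) ≠ 0 := by linarith
      positivity
    show (((k.factorial : ℝ))⁻¹ *
        ‖(fderiv ℂ Hmap z).inverse.compContinuousMultilinearMap
            (iteratedFDeriv ℂ k Hmap z)‖) ^ ((1 : ℝ) / ((k : ℝ) - 1)) = 0
    rw [h0]
    simp only [norm_zero, mul_zero]
    exact Real.zero_rpow hne
  have hsup : gammaInv Hmap z ≤ G := by
    unfold gammaInv
    apply ciSup_le
    intro k
    by_cases h2 : 2 ≤ k
    · rw [if_pos h2]
      by_cases h6 : k ≤ 6
      · have : t k ≤ G := by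
          interval_cases k <;>
            simp [hG, le_max_iff, le_refl, true_or, or_true]
        exact this
      · have h7 : 7 ≤ k := by omega
        have : t k ≤ G := by rw [hker k h7]; exact hG0
        exact this
    · rw [if_neg h2]; exact hG0
  have hGr : G < 0.03 / β := by
    rw [hG]
    exact max_lt (main 2 (by norm_num) (by norm_num))
      (max_lt (main 3 (by norm_num) (by norm_num))
        (max_lt (main 4 (by norm_num) (by norm_num))
          (max_lt (main 5 (by norm_num) (by norm_num))
            (main 6 (by norm_num) (by norm_num)))))
  have : alphaInv Hmap z = β * gammaInv Hmap z := by
    rw [alphaInv, hβeq]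
  rw [this]
  calc β * gammaInv Hmap z ≤ β * G := mul_le_mul_of_nonneg_left hsup hβ0.le
    _ < β * (0.03 / β) := mul_lt_mul_of_pos_left hGr hβ0
    _ = 0.03 := by field_simp
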